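/- Let F = b(I + f·σ) be a POVM element applied to the ancilla output of the universal 1→2 cloner. Then the effective POVM element on the input qubit is E = b(I − (1/3) f·σ); in particular |e| ≤ 1/3 and no ancilla measurement yields a sharp effective measurement on the input. -/

import Mathlib

open scoped ComplexConjugate ComplexOrder
open Finset Matrix

noncomputable section

/-- Index set for three qubits: (clone 1, clone 2, ancilla). -/
abbrev I3 := Fin 2 × Fin 2 × Fin 2

/-- Image of |0⟩|00⟩ under the universal 1→2 cloner:
    √(2/3)|00⟩|1⟩ − (1/√6)(|01⟩+|10⟩)|0⟩. -/
def out0 : I3 → ℂ := fun p =>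
  if p = (0, 0, 1) then ((Real.sqrt (2/3) : ℝ) : ℂ)
  else if p = (0, 1, 0) then -(((1 / Real.sqrt 6 : ℝ)) : ℂ)
  else if p = (1, 0, 0) then -(((1 / Real.sqrt 6 : ℝ)) : ℂ)
  else 0

/-- Image of |1⟩|00⟩ under the universal 1→2 cloner:
    −√(2/3)|11⟩|0⟩ + (1/√6)(|10⟩+|01⟩)|1⟩. -/
def out1 : I3 → ℂ := fun p =>
  if p = (1, 1, 0) then -((Real.sqrt (2/3) : ℝ) : ℂ)
  else if p = (1, 0, 1) then (((1 / Real.sqrt 6 : ℝ)) : ℂ)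
  else if p = (0, 1, 1) then (((1 / Real.sqrt 6 : ℝ)) : ℂ)
  else 0

/-- Output of the cloner on input α|0⟩+β|1⟩. -/
def cloneOut (α β : ℂ) : I3 → ℂ := fun p => α * out0 p + β * out1 p

/-- Output density matrix U(|φ⟩⟨φ| ⊗ |00⟩⟨00|)U†. -/
def rhoOut (α β : ℂ) : Matrix I3 I3 ℂ :=
  Matrix.of fun p q => cloneOut α β p * conj (cloneOut α β q)

/-- Reduced state of the first clone. -/
def rhoC (α β : ℂ) : Matrix (Fin 2) (Fin 2) ℂ :=
  Matrix.of fun i j => ∑ b : Fin 2, ∑ c : Fin 2, rhoOut α β (i, b, c) (j, b, c)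

/-- Reduced state of the ancilla. -/
def rhoA (α β : ℂ) : Matrix (Fin 2) (Fin 2) ℂ :=
  Matrix.of fun i j => ∑ a : Fin 2, ∑ b : Fin 2, rhoOut α β (a, b, i) (a, b, j)

/-- Reduced state of the two clones. -/
def rhoCC (α β : ℂ) : Matrix (Fin 2 × Fin 2) (Fin 2 × Fin 2) ℂ :=
  Matrix.of fun p q => ∑ c : Fin 2, rhoOut α β (p.1, p.2, c) (q.1, q.2, c)

def σx : Matrix (Fin 2) (Fin 2) ℂ := !![0, 1; 1, 0]
def σy : Matrix (Fin 2) (Fin 2) ℂ := !![0, -Complex.I; Complex.I, 0]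
def σz : Matrix (Fin 2) (Fin 2) ℂ := !![1, 0; 0, -1]

/-- s·σ for a real 3-vector s. -/
def pauliDot (s : Fin 3 → ℝ) : Matrix (Fin 2) (Fin 2) ℂ :=
  ((s 0 : ℝ) : ℂ) • σx + ((s 1 : ℝ) : ℂ) • σy + ((s 2 : ℝ) : ℂ) • σz

/-- (1/2)(I + s·σ), the state with Bloch vector s. -/
def blochMat (s : Fin 3 → ℝ) : Matrix (Fin 2) (Fin 2) ℂ :=
  (1/2 : ℂ) • (1 + pauliDot s)

def φvec (α β : ℂ) : Fin 2 → ℂ := ![α, β]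

/-- Outer product |v⟩⟨v| on a qubit. -/
def outer (v : Fin 2 → ℂ) : Matrix (Fin 2) (Fin 2) ℂ :=
  Matrix.of fun i j => v i * conj (v j)

/-- The images U(|i⟩|00⟩) of the two input basis states. -/
def Uout : Fin 2 → I3 → ℂ := ![out0, out1]

/-- Effective operator on the input qubit corresponding to an operator F on the output:
    E i j = ⟨U(|i⟩|00⟩)| F |U(|j⟩|00⟩)⟩ = (⟨00|_{ba} U† F U |00⟩_{ba}) i j. -/
def effOf (F : Matrix I3 I3 ℂ) : Matrix (Fin 2) (Fin 2) ℂ :=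
  Matrix.of fun i j => ∑ p : I3, ∑ q : I3, conj (Uout i p) * F p q * Uout j q

/-- F ⊗ I ⊗ I: a measurement on the first clone only. -/
def extC (F : Matrix (Fin 2) (Fin 2) ℂ) : Matrix I3 I3 ℂ :=
  Matrix.of fun p q => F p.1 q.1 * (if p.2 = q.2 then 1 else 0)

/-- I ⊗ I ⊗ F: a measurement on the ancilla only. -/
def extA (F : Matrix (Fin 2) (Fin 2) ℂ) : Matrix I3 I3 ℂ :=
  Matrix.of fun p q => (if (p.1, p.2.1) = (q.1, q.2.1) then 1 else 0) * F p.2.2 q.2.2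

/-- F ⊗ I_ancilla: a measurement on the two clones. -/
def extCC (F : Matrix (Fin 2 × Fin 2) (Fin 2 × Fin 2) ℂ) : Matrix I3 I3 ℂ :=
  Matrix.of fun p q => F (p.1, p.2.1) (q.1, q.2.1) * (if p.2.2 = q.2.2 then 1 else 0)

/-- Bell basis on two qubits, in the order φ⁺, ψ⁺, φ⁻, ψ⁻. -/
def bell : Fin 4 → (Fin 2 × Fin 2) → ℂ :=
  ![fun p => if p = (0,0) then ((1 / Real.sqrt 2 : ℝ) : ℂ)
             else if p = (1,1) then ((1 / Real.sqrt 2 : ℝ) : ℂ) else 0,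
    fun p => if p = (0,1) then ((1 / Real.sqrt 2 : ℝ) : ℂ)
             else if p = (1,0) then ((1 / Real.sqrt 2 : ℝ) : ℂ) else 0,
    fun p => if p = (0,0) then ((1 / Real.sqrt 2 : ℝ) : ℂ)
             else if p = (1,1) then -((1 / Real.sqrt 2 : ℝ) : ℂ) else 0,
    fun p => if p = (0,1) then ((1 / Real.sqrt 2 : ℝ) : ℂ)
             else if p = (1,0) then -((1 / Real.sqrt 2 : ℝ) : ℂ) else 0]

/-- Kronecker product of two single-qubit matrices. -/
def kron2 (A B : Matrix (Fin 2) (Fin 2) ℂ) : Matrix (Fin 2 × Fin 2) (Fin 2 × Fin 2) ℂ :=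
  Matrix.of fun p q => A p.1 q.1 * B p.2 q.2

/-- Projector onto the symmetric subspace of two qubits: I − |ψ⁻⟩⟨ψ⁻|. -/
def symProj : Matrix (Fin 2 × Fin 2) (Fin 2 × Fin 2) ℂ :=
  1 - Matrix.of fun p q => bell 3 p * conj (bell 3 q)

/-- Projector onto the antisymmetric subspace: |ψ⁻⟩⟨ψ⁻|. -/
def antiProj : Matrix (Fin 2 × Fin 2) (Fin 2 × Fin 2) ℂ :=
  Matrix.of fun p q => bell 3 p * conj (bell 3 q)

/-- Computational basis vector |abc⟩ of three qubits. -/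
def e3 (a b c : Fin 2) : I3 → ℂ := fun p => if p = (a, b, c) then 1 else 0

/-- ∑ₚ conj(v p) w p, the inner product on three qubits. -/
def inner3 (v w : I3 → ℂ) : ℂ := ∑ p : I3, conj (v p) * w p


lemma anc_sq6 : ((Real.sqrt 6 : ℝ) : ℂ) ^ 2 = 6 := by
  rw [← Complex.ofReal_pow, Real.sq_sqrt (by norm_num)]; norm_num

set_option maxHeartbeats 2000000 in
lemma anc_heq (b : ℝ) (f : Fin 3 → ℝ) :
    effOf (extA ((b : ℂ) • (1 + pauliDot f))) = (b : ℂ) • (1 - (1/3 : ℂ) • pauliDot f) := by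
  have hre : Real.sqrt (2/3) = 2 / Real.sqrt 6 := by
    rw [eq_div_iff (by positivity), ← Real.sqrt_mul (by norm_num)]
    norm_num
  have h6 : ((Real.sqrt 6 : ℝ) : ℂ) ^ 2 = 6 := anc_sq6
  have hne : ((Real.sqrt 6 : ℝ) : ℂ) ≠ 0 := by
    simp [Real.sqrt_eq_zero']
  have h64 : ((Real.sqrt 6 : ℝ) : ℂ) ^ 4 = 36 := by
    rw [(by ring : ((Real.sqrt 6 : ℝ) : ℂ) ^ 4 = (((Real.sqrt 6 : ℝ) : ℂ) ^ 2) ^ 2), h6]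
    norm_num
  ext i j
  fin_cases i <;> fin_cases j <;>
  · simp only [effOf, extA, Uout, out0, out1, pauliDot, σx, σy, σz, hre,
      Fintype.sum_prod_type, Fin.sum_univ_two, Matrix.of_apply, Matrix.cons_val',
      Matrix.cons_val_zero, Matrix.cons_val_one, Matrix.head_cons, Matrix.head_fin_const,
      Matrix.smul_apply, Matrix.add_apply, Matrix.sub_apply, Matrix.one_apply,
      Matrix.cons_val_fin_one, Matrix.empty_val', smul_eq_mul]
    norm_num [Prod.ext_iff, Complex.ofReal_div, map_ofNat, map_div₀, Complex.conj_ofReal]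
    field_simp
    ring_nf
    simp only [h6, h64]
    all_goals ring_nf

lemma anc_det (b : ℝ) (f : Fin 3 → ℝ) (hb : 0 < b)
    (hf : (f 0)^2 + (f 1)^2 + (f 2)^2 ≤ 1) (v : Fin 2 → ℂ) :
    ((b : ℂ) • (1 - (1/3 : ℂ) • pauliDot f)).det ≠ (outer v).det := by
  have h1 : (outer v).det = 0 := by
    simp [outer, Matrix.det_fin_two]; ring
  have h2 : ((b : ℂ) • (1 - (1/3 : ℂ) • pauliDot f)).det =
      ((b^2 * (1 - ((f 0)^2 + (f 1)^2 + (f 2)^2)/9) : ℝ) : ℂ) := by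
    simp only [Matrix.det_fin_two, pauliDot, σx, σy, σz, Matrix.smul_apply, Matrix.sub_apply,
      Matrix.add_apply, Matrix.one_apply, Matrix.cons_val', Matrix.cons_val_zero,
      Matrix.cons_val_one, Matrix.head_cons, Matrix.head_fin_const, Matrix.cons_val_fin_one,
      Matrix.empty_val', smul_eq_mul, if_true, if_false]
    norm_num
    push_cast
    linear_combination ((b:ℂ)^2 * (f 1)^2 / 9) * Complex.I_sq
  rw [h1, h2]
  intro h
  have h3 : b^2 * (1 - ((f 0)^2 + (f 1)^2 + (f 2)^2)/9) = 0 := by exact_mod_cast h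
  nlinarith [sq_nonneg b]

/-- a POVM element F = b(I + f·σ) on the ancilla has effective element
E = b(I − (1/3) f·σ) on the input; no ancilla measurement is sharp on the input. -/
theorem ancilla_effective (b : ℝ) (f : Fin 3 → ℝ) (hb : 0 < b) (hb1 : b ≤ 1)
    (hf : (f 0)^2 + (f 1)^2 + (f 2)^2 ≤ 1) :
    effOf (extA ((b : ℂ) • (1 + pauliDot f))) =
      (b : ℂ) • (1 - (1/3 : ℂ) • pauliDot f) ∧
    ∀ v : Fin 2 → ℂ, effOf (extA ((b : ℂ) • (1 + pauliDot f))) ≠ outer v := by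
  refine ⟨anc_heq b f, fun v hv => ?_⟩
  rw [anc_heq b f] at hv
  exact anc_det b f hb hf v (congrArg Matrix.det hv)
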